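/- Let M = {(x, L) ∈ ℝ² × P(ℝ²) : x ∈ L} be the real blow-up of ℝ² at the origin, let L₀ ∈ P(ℝ²) be the line spanned by (1,0), and let M' = M \ {((0,0), L₀)} with the subspace topology; let ψ : M' → ℝ² be the first projection. Then ψ is surjective and every fiber of ψ is connected, but the preimage ψ⁻¹([u,v]) of the segment from u = (−1, 0) to v = (1, 0) is not connected. -/

import Mathlib

/-- The quotient topology on the real projective line `P(ℝ²)`. -/
noncomputable instance : TopologicalSpace (Projectivization ℝ (ℝ × ℝ)) :=
  inferInstanceAs (TopologicalSpace (Quotient (projectivizationSetoid ℝ (ℝ × ℝ))))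

/-- The line `L₀ ∈ P(ℝ²)` spanned by `(1, 0)`. -/
noncomputable def L₀ : Projectivization ℝ (ℝ × ℝ) :=
  Projectivization.mk ℝ ((1 : ℝ), (0 : ℝ)) (by simp)

/-- The real blow-up of `ℝ²` at the origin with the point `((0,0), L₀)` removed,
topologized as a subspace of `ℝ² × P(ℝ²)`. -/
def BlowUpMinus : Type :=
  { p : (ℝ × ℝ) × Projectivization ℝ (ℝ × ℝ) //
      p.1 ∈ p.2.submodule ∧ p ≠ (((0 : ℝ), (0 : ℝ)), L₀) }

noncomputable instance : TopologicalSpace BlowUpMinus :=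
  inferInstanceAs (TopologicalSpace
    { p : (ℝ × ℝ) × Projectivization ℝ (ℝ × ℝ) //
        p.1 ∈ p.2.submodule ∧ p ≠ (((0 : ℝ), (0 : ℝ)), L₀) })

/-- The first projection `ψ : M' → ℝ²`. -/
def blowDownMinus (p : BlowUpMinus) : ℝ × ℝ := p.1.1

private lemma eq_mk_of_mem {L : Projectivization ℝ (ℝ × ℝ)} {u : ℝ × ℝ} (hu : u ≠ 0)
    (h : u ∈ L.submodule) : L = Projectivization.mk ℝ u hu := by
  induction L using Projectivization.ind with
  | h v hv =>
    rw [Projectivization.submodule_mk, Submodule.mem_span_singleton] at h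
    obtain ⟨c, rfl⟩ := h
    exact ((Projectivization.mk_eq_mk_iff' ℝ _ _ hu hv).mpr ⟨c, rfl⟩).symm

private lemma mk_eq_L0_iff {v : ℝ × ℝ} (hv : v ≠ 0) :
    Projectivization.mk ℝ v hv = L₀ ↔ v.2 = 0 := by
  rw [L₀, Projectivization.mk_eq_mk_iff' ℝ _ _ hv (by simp)]
  constructor
  · rintro ⟨a, ha⟩
    have h2 := congrArg Prod.snd ha
    simpa using h2.symm
  · intro h2
    refine ⟨v.1, ?_⟩
    rw [Prod.ext_iff]
    constructor <;> simp [h2]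

private lemma isClosed_L0 : IsClosed ({L₀} : Set (Projectivization ℝ (ℝ × ℝ))) := by
  have hq : Topology.IsQuotientMap
      (fun w : {v : ℝ × ℝ // v ≠ 0} =>
        (Quotient.mk'' w : Projectivization ℝ (ℝ × ℝ))) :=
    isQuotientMap_quot_mk
  refine (hq.isClosed_preimage (s := {L₀})).mp ?_
  have hset : (fun w : {v : ℝ × ℝ // v ≠ 0} =>
        (Quotient.mk'' w : Projectivization ℝ (ℝ × ℝ))) ⁻¹' {L₀}
      = {w : {v : ℝ × ℝ // v ≠ 0} | (w : ℝ × ℝ).2 = 0} := by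
    ext w
    have hmk : (Quotient.mk'' w : Projectivization ℝ (ℝ × ℝ))
        = Projectivization.mk ℝ w.1 w.2 := rfl
    simp only [Set.mem_preimage, Set.mem_singleton_iff, hmk, Set.mem_setOf_eq]
    exact mk_eq_L0_iff w.2
  rw [hset]
  exact isClosed_eq (continuous_subtype_val.snd) continuous_const

private lemma seg_snd {x : ℝ × ℝ} (hx : x ∈ segment ℝ ((-1:ℝ),(0:ℝ)) ((1:ℝ),(0:ℝ))) :
    x.2 = 0 := by
  obtain ⟨a, b, ha, hb, hab, rfl⟩ := hx
  simp

private lemma mem_L0 : ∀ t : ℝ, ((t : ℝ), (0 : ℝ)) ∈ L₀.submodule := by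
  intro t
  rw [L₀, Projectivization.submodule_mk, Submodule.mem_span_singleton]
  exact ⟨t, by rw [Prod.ext_iff]; constructor <;> simp⟩

/-- For the punctured blow-up `M'` and the first projection
`ψ : M' → ℝ²`: `ψ` is surjective and has connected fibers, but the preimage of the
segment from `(-1, 0)` to `(1, 0)` is not connected. -/
theorem stmt6 :
    Function.Surjective blowDownMinus ∧
      (∀ u : ℝ × ℝ, IsConnected (blowDownMinus ⁻¹' {u})) ∧
      ¬ IsConnected
        (blowDownMinus ⁻¹' segment ℝ ((-1 : ℝ), (0 : ℝ)) ((1 : ℝ), (0 : ℝ))) := by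
  -- a generic point construction
  have hL01 : Projectivization.mk ℝ ((0:ℝ),(1:ℝ)) (by simp) ≠ L₀ := by
    intro h
    have := (mk_eq_L0_iff (by simp)).mp h
    norm_num at this
  refine ⟨?_, ?_, ?_⟩
  · -- surjectivity
    intro u
    by_cases hu : u = 0
    · refine ⟨⟨((0,0), Projectivization.mk ℝ ((0:ℝ),(1:ℝ)) (by simp)), ?_, ?_⟩, ?_⟩
      · exact (Projectivization.mk ℝ ((0:ℝ),(1:ℝ)) (by simp)).submodule.zero_mem
      · intro h
        exact hL01 (congrArg Prod.snd h)
      · simp [blowDownMinus, hu]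
    · refine ⟨⟨(u, Projectivization.mk ℝ u hu), ?_, ?_⟩, rfl⟩
      · rw [Projectivization.submodule_mk]
        exact Submodule.mem_span_singleton_self u
      · intro h
        exact hu (congrArg Prod.fst h)
  · -- connected fibers
    intro u
    by_cases hu : u = 0
    · -- fiber over origin: image of ℝ
      subst hu
      have hmem : ∀ t : ℝ, ((0:ℝ),(0:ℝ)) ∈ (Projectivization.mk ℝ ((t:ℝ),(1:ℝ))
          (by simp)).submodule := fun t =>
        (Projectivization.mk ℝ ((t:ℝ),(1:ℝ)) (by simp)).submodule.zero_mem
      have hne : ∀ t : ℝ, Projectivization.mk ℝ ((t:ℝ),(1:ℝ)) (by simp) ≠ L₀ := by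
        intro t h
        rw [mk_eq_L0_iff] at h
        norm_num at h
      set f : ℝ → BlowUpMinus := fun t =>
        ⟨(((0:ℝ),(0:ℝ)), Projectivization.mk ℝ ((t:ℝ),(1:ℝ)) (by simp)), hmem t,
          fun h => hne t (congrArg Prod.snd h)⟩ with hf
      have hcf : Continuous f := by
        apply Continuous.subtype_mk
        apply Continuous.prodMk continuous_const
        have heq : (fun t : ℝ => Projectivization.mk ℝ ((t:ℝ),(1:ℝ)) (by simp))
            = (fun w : {v : ℝ × ℝ // v ≠ 0} =>
                (Quotient.mk'' w : Projectivization ℝ (ℝ × ℝ))) ∘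
              (fun t : ℝ => (⟨(t, 1), by simp⟩ : {v : ℝ × ℝ // v ≠ 0})) := rfl
        rw [heq]
        exact continuous_quot_mk.comp
          (Continuous.subtype_mk (continuous_id.prodMk continuous_const) _)
      have hrange : blowDownMinus ⁻¹' {0} = Set.range f := by
        ext p
        constructor
        · intro hp
          have hp1 : p.val.1 = 0 := hp
          have hL : p.val.2 ≠ L₀ := by
            intro h
            exact p.prop.2 (Prod.ext hp1 h)
          have hrep := (Projectivization.mk_rep p.val.2).symm
          have hv2 : (p.val.2.rep).2 ≠ 0 := by
            intro h0
            exact hL (hrep.trans ((mk_eq_L0_iff p.val.2.rep_nonzero).mpr h0))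
          refine ⟨(p.val.2.rep).1 / (p.val.2.rep).2, ?_⟩
          apply Subtype.ext
          apply Prod.ext
          · exact hp1.symm
          · show Projectivization.mk ℝ _ _ = p.val.2
            rw [hrep]
            rw [Projectivization.mk_eq_mk_iff' ℝ _ _ (by simp) p.val.2.rep_nonzero]
            refine ⟨1 / (p.val.2.rep).2, Prod.ext ?_ ?_⟩
            · simp only [Prod.smul_fst, smul_eq_mul]
              rw [← hrep]
              field_simp
            · simp only [Prod.smul_snd, smul_eq_mul]
              field_simp
        · rintro ⟨t, rfl⟩
          show blowDownMinus (f t) ∈ ({0} : Set (ℝ × ℝ))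
          exact rfl
      rw [hrange]
      exact isConnected_range hcf
    · -- fiber over nonzero point: a singleton
      have hmem : u ∈ (Projectivization.mk ℝ u hu).submodule := by
        rw [Projectivization.submodule_mk]
        exact Submodule.mem_span_singleton_self u
      have hsing : blowDownMinus ⁻¹' {u}
          = {⟨(u, Projectivization.mk ℝ u hu), hmem,
              fun h => hu (congrArg Prod.fst h)⟩} := by
        ext p
        constructor
        · intro hp
          have hp1 : p.val.1 = u := hp
          have hL : p.val.2 = Projectivization.mk ℝ u hu :=
            eq_mk_of_mem hu (hp1 ▸ p.prop.1)
          exact Subtype.ext (Prod.ext hp1 hL)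
        · rintro rfl
          rfl
      rw [hsing]
      exact isConnected_singleton
  · -- not connected
    rintro ⟨-, hconn⟩
    set S := blowDownMinus ⁻¹' segment ℝ ((-1 : ℝ), (0 : ℝ)) ((1 : ℝ), (0 : ℝ)) with hS
    have hU : IsOpen {p : BlowUpMinus | 0 < p.val.1.1} :=
      isOpen_lt continuous_const (continuous_subtype_val.fst.fst)
    have hV : IsOpen ({p : BlowUpMinus | p.val.1.1 < 0} ∪ {p : BlowUpMinus | p.val.2 ≠ L₀}) := by
      apply IsOpen.union
      · exact isOpen_lt (continuous_subtype_val.fst.fst) continuous_const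
      · have : {p : BlowUpMinus | p.val.2 ≠ L₀}
            = (fun p : BlowUpMinus => p.val.2) ⁻¹' ({L₀}ᶜ) := rfl
        rw [this]
        exact (isClosed_L0.isOpen_compl).preimage continuous_subtype_val.snd
    have hsub : S ⊆ {p : BlowUpMinus | 0 < p.val.1.1} ∪
        ({p : BlowUpMinus | p.val.1.1 < 0} ∪ {p : BlowUpMinus | p.val.2 ≠ L₀}) := by
      intro p hp
      rcases lt_trichotomy p.val.1.1 0 with h | h | h
      · exact Or.inr (Or.inl h)
      · refine Or.inr (Or.inr ?_)
        intro hL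
        apply p.prop.2
        have h2 : p.val.1.2 = 0 := seg_snd hp
        have h1 : p.val.1 = ((0:ℝ),(0:ℝ)) := Prod.ext h h2
        exact Prod.ext h1 hL
      · exact Or.inl h
    have hmem1 : (((1:ℝ),(0:ℝ)), L₀) ∈ {p : (ℝ × ℝ) × Projectivization ℝ (ℝ × ℝ) |
        p.1 ∈ p.2.submodule ∧ p ≠ (((0 : ℝ), (0 : ℝ)), L₀)} :=
      ⟨mem_L0 1, fun h => by simpa using congrArg (fun q => q.1.1) h⟩
    have hmem2 : ((((-1):ℝ),(0:ℝ)), L₀) ∈ {p : (ℝ × ℝ) × Projectivization ℝ (ℝ × ℝ) |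
        p.1 ∈ p.2.submodule ∧ p ≠ (((0 : ℝ), (0 : ℝ)), L₀)} :=
      ⟨mem_L0 (-1), fun h => by simpa using congrArg (fun q => q.1.1) h⟩
    have hne1 : (S ∩ {p : BlowUpMinus | 0 < p.val.1.1}).Nonempty := by
      refine ⟨⟨(((1:ℝ),(0:ℝ)), L₀), hmem1⟩, ?_, by show (0:ℝ) < 1; norm_num⟩
      exact right_mem_segment ℝ _ _
    have hne2 : (S ∩ ({p : BlowUpMinus | p.val.1.1 < 0} ∪
        {p : BlowUpMinus | p.val.2 ≠ L₀})).Nonempty := by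
      refine ⟨⟨((((-1):ℝ),(0:ℝ)), L₀), hmem2⟩, ?_, Or.inl (by show (-1:ℝ) < 0; norm_num)⟩
      exact left_mem_segment ℝ _ _
    obtain ⟨p, hpS, hp1, hp2⟩ := hconn _ _ hU hV hsub hne1 hne2
    have hp1' : 0 < p.val.1.1 := hp1
    rcases hp2 with h | h
    · have h' : p.val.1.1 < 0 := h
      exact absurd (lt_trans hp1' h') (lt_irrefl 0)
    · apply h
      have h2 : p.val.1.2 = 0 := seg_snd hpS
      have hne0 : p.val.1 ≠ 0 := by
        intro h0
        rw [h0] at hp1'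
        norm_num at hp1'
      have := eq_mk_of_mem hne0 p.prop.1
      rw [this, mk_eq_L0_iff]
      exact h2
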